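/- Suppose an m×n Boolean measurement matrix M is (e0, e1, e'0, e'1)-resilient for d-sparse vectors, where e'1 + 1 ≤ d ≤ n. Then for every ε > 0, either e1 < (e'1 + 1)·m/(ε·d) or e'0 ≥ (1 − ε)·(n − d + 1)/(e'1 + 1)². -/

import Mathlib

/-- Support of a Boolean vector. -/
def suppB {ι : Type*} [Fintype ι] (x : ι → Bool) : Finset ι :=
  Finset.univ.filter (fun i => x i = true)

/-- The measurement outcome `M[x]`: bitwise OR of the columns of `M` picked by `supp x`. -/
def orMeasure {ρ ι : Type*} [Fintype ι] (M : ρ → ι → Bool) (x : ι → Bool) : ρ → Bool :=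
  fun i => decide (∃ j, M i j = true ∧ x j = true)

/-- The ordered pair `(x, y)` is `(e0, e1)`-close. -/
def ClosePair {ι : Type*} [Fintype ι] [DecidableEq ι] (e0 e1 : ℕ) (x y : ι → Bool) : Prop :=
  (suppB y \ suppB x).card ≤ e0 ∧ (suppB x \ suppB y).card ≤ e1

/-- `(e0, e1, e0', e1')`-resilient measurement matrix for `d`-sparse vectors. -/
def Resilient {ρ ι : Type*} [Fintype ρ] [DecidableEq ρ] [Fintype ι] [DecidableEq ι]
    (M : ρ → ι → Bool) (d e0 e1 e0' e1' : ℕ) : Prop :=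
  ∀ y : ρ → Bool, ∃ z : ι → Bool, ∀ x : ι → Bool, (suppB x).card ≤ d →
    ¬ ClosePair e0' e1' x z → ¬ ClosePair e0 e1 (orMeasure M x) y

namespace Stmt14Aux

variable {m n : ℕ}

/-- Rows hit by the set `T` of columns. -/
def meas (M : Fin m → Fin n → Bool) (T : Finset (Fin n)) : Finset (Fin m) :=
  Finset.univ.filter (fun i => ∃ j ∈ T, M i j = true)

/-- Boolean indicator vector of a finset of columns. -/
def indic (T : Finset (Fin n)) : Fin n → Bool := fun j => decide (j ∈ T)

lemma suppB_indic (T : Finset (Fin n)) : suppB (indic T) = T := by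
  ext j; simp [suppB, indic]

lemma suppB_orMeasure (M : Fin m → Fin n → Bool) (T : Finset (Fin n)) :
    suppB (orMeasure M (indic T)) = meas M T := by
  ext i
  simp only [suppB, orMeasure, meas, indic, Finset.mem_filter, decide_eq_true_eq]
  constructor
  · rintro ⟨hu, j, hM, hj⟩; exact ⟨hu, j, hj, hM⟩
  · rintro ⟨hu, j, hj, hM⟩; exact ⟨hu, j, hM, hj⟩

lemma meas_mono (M : Fin m → Fin n → Bool) {S T : Finset (Fin n)} (h : S ⊆ T) :
    meas M S ⊆ meas M T := by
  intro i hi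
  simp only [meas, Finset.mem_filter] at *
  obtain ⟨hu, j, hj, hM⟩ := hi
  exact ⟨hu, j, h hj, hM⟩

lemma meas_union (M : Fin m → Fin n → Bool) (S T : Finset (Fin n)) :
    meas M (S ∪ T) = meas M S ∪ meas M T := by
  ext i
  simp only [meas, Finset.mem_filter, Finset.mem_union, Finset.mem_univ, true_and]
  constructor
  · rintro ⟨j, hj | hj, hM⟩
    · exact Or.inl ⟨j, hj, hM⟩
    · exact Or.inr ⟨j, hj, hM⟩
  · rintro (⟨j, hj, hM⟩ | ⟨j, hj, hM⟩)
    · exact ⟨j, Or.inl hj, hM⟩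
    · exact ⟨j, Or.inr hj, hM⟩

lemma meas_sdiff_le_sum (M : Fin m → Fin n → Bool) (K S : Finset (Fin n)) :
    (meas M K \ meas M S).card ≤ ∑ j ∈ K, (meas M {j} \ meas M S).card := by
  have hsub : meas M K \ meas M S ⊆ K.biUnion (fun j => meas M {j} \ meas M S) := by
    intro i hi
    rw [Finset.mem_sdiff] at hi
    obtain ⟨hiK, hiS⟩ := hi
    simp only [meas, Finset.mem_filter, Finset.mem_univ, true_and] at hiK
    obtain ⟨j, hj, hM⟩ := hiK
    refine Finset.mem_biUnion.2 ⟨j, hj, ?_⟩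
    rw [Finset.mem_sdiff]
    refine ⟨?_, hiS⟩
    simp [meas, hM]
  calc (meas M K \ meas M S).card ≤ (K.biUnion (fun j => meas M {j} \ meas M S)).card :=
        Finset.card_le_card hsub
    _ ≤ ∑ j ∈ K, (meas M {j} \ meas M S).card := Finset.card_biUnion_le

set_option maxHeartbeats 1000000 in
/-- Greedy construction of the heavy-column set `S`. -/
lemma exists_greedy (M : Fin m → Fin n → Bool) (c L : ℕ) :
    ∃ S : Finset (Fin n), S.card ≤ c ∧ (L + 1) * S.card ≤ (meas M S).card ∧
      (S.card = c ∨ ∀ j ∉ S, (meas M {j} \ meas M S).card ≤ L) := by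
  classical
  set F : Finset (Finset (Fin n)) :=
    (Finset.univ : Finset (Fin n)).powerset.filter
      (fun S => S.card ≤ c ∧ (L + 1) * S.card ≤ (meas M S).card) with hF
  have hne : F.Nonempty := by
    refine ⟨∅, ?_⟩
    simp [hF]
  obtain ⟨S, hSF, hmax⟩ := F.exists_max_image Finset.card hne
  have hSF' := hSF
  rw [hF, Finset.mem_filter] at hSF'
  obtain ⟨-, hSc, hSm⟩ := hSF'
  refine ⟨S, hSc, hSm, ?_⟩
  by_contra hcon
  push_neg at hcon
  obtain ⟨hne', j, hjS, hjheavy⟩ := hcon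
  have hccard : S.card < c := lt_of_le_of_ne hSc hne'
  have hins : insert j S ∈ F := by
    rw [hF, Finset.mem_filter]
    refine ⟨Finset.mem_powerset.2 (Finset.subset_univ _), ?_, ?_⟩
    · rw [Finset.card_insert_of_notMem hjS]; omega
    · rw [Finset.card_insert_of_notMem hjS]
      have hmu : meas M (insert j S) = meas M {j} ∪ meas M S := by
        have : insert j S = {j} ∪ S := by
          ext a; simp
        rw [this, meas_union]
      have hcard : (meas M (insert j S)).card
          = (meas M {j} \ meas M S).card + (meas M S).card := by
        rw [hmu, ← Finset.card_sdiff_add_card]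
      rw [hcard]
      have : L + 1 ≤ (meas M {j} \ meas M S).card := by omega
      calc (L + 1) * (S.card + 1) = (L + 1) * S.card + (L + 1) := by ring
        _ ≤ (meas M S).card + (meas M {j} \ meas M S).card := by omega
        _ = (meas M {j} \ meas M S).card + (meas M S).card := by omega
  have := hmax _ hins
  rw [Finset.card_insert_of_notMem hjS] at this
  omega

end Stmt14Aux

open Stmt14Aux in
set_option maxHeartbeats 1000000 in
/-- False-negative trade-off for resilient measurement matrices. -/
theorem stmt14 {m n : ℕ} (M : Fin m → Fin n → Bool) (d e0 e1 e0' e1' : ℕ)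
    (h1 : e1' + 1 ≤ d) (h2 : d ≤ n)
    (hres : Resilient M d e0 e1 e0' e1')
    (ε : ℝ) (hε : 0 < ε) :
    (e1 : ℝ) < ((e1' : ℝ) + 1) * (m : ℝ) / (ε * (d : ℝ)) ∨
      (1 - ε) * ((n : ℝ) - (d : ℝ) + 1) / ((e1' : ℝ) + 1) ^ 2 ≤ (e0' : ℝ) := by
  classical
  set k : ℕ := e1' + 1 with hk
  have hk1 : 1 ≤ k := by omega
  have hd1 : 1 ≤ d := by omega
  have hndr : (0:ℝ) ≤ (n : ℝ) - (d : ℝ) + 1 := by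
    have : (d:ℝ) ≤ (n:ℝ) := by exact_mod_cast h2
    linarith
  by_cases hε1 : 1 ≤ ε
  · right
    have hnum : (1 - ε) * ((n : ℝ) - (d : ℝ) + 1) ≤ 0 :=
      mul_nonpos_of_nonpos_of_nonneg (by linarith) hndr
    have hden : (0:ℝ) < ((e1' : ℝ) + 1) ^ 2 := by positivity
    have := div_nonpos_of_nonpos_of_nonneg hnum (le_of_lt hden)
    exact le_trans this (by positivity)
  push_neg at hε1
  by_cases hLeft : (e1 : ℝ) < ((e1' : ℝ) + 1) * (m : ℝ) / (ε * (d : ℝ))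
  · exact Or.inl hLeft
  right
  push_neg at hLeft
  have hεd : (0:ℝ) < ε * (d : ℝ) := by
    have : (0:ℝ) < (d:ℝ) := by exact_mod_cast hd1
    positivity
  have hkm : ((k : ℝ)) * (m : ℝ) ≤ ε * (d : ℝ) * (e1 : ℝ) := by
    rw [div_le_iff₀ hεd] at hLeft
    have : ((k:ℝ)) = ((e1':ℝ) + 1) := by push_cast [hk]; ring
    rw [this]
    linarith
  -- It suffices to prove the natural-number inequality n + 1 ≤ d + e0'.
  suffices hnat : n + 1 ≤ d + e0' by
    have hval : (n : ℝ) - (d : ℝ) + 1 ≤ (e0' : ℝ) := by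
      have : ((n:ℝ) + 1) ≤ (d : ℝ) + (e0' : ℝ) := by exact_mod_cast hnat
      linarith
    have hden : (1:ℝ) ≤ ((e1' : ℝ) + 1) ^ 2 := by
      have h0 : (0:ℝ) ≤ (e1':ℝ) := Nat.cast_nonneg _
      nlinarith
    have hfac : (1 - ε) * ((n : ℝ) - (d : ℝ) + 1) ≤ (n : ℝ) - (d : ℝ) + 1 := by
      nlinarith
    calc (1 - ε) * ((n : ℝ) - (d : ℝ) + 1) / ((e1' : ℝ) + 1) ^ 2
        ≤ (1 - ε) * ((n : ℝ) - (d : ℝ) + 1) / 1 := by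
          apply div_le_div_of_nonneg_left ?_ ?_ hden
          · nlinarith
          · norm_num
      _ = (1 - ε) * ((n : ℝ) - (d : ℝ) + 1) := by ring
      _ ≤ (n : ℝ) - (d : ℝ) + 1 := hfac
      _ ≤ (e0' : ℝ) := hval
  -- Natural-number combinatorial part.
  set L : ℕ := e1 / k with hL
  obtain ⟨S, hScard, hSmeas, hSalt⟩ := exists_greedy M (d - k) L
  -- every k-set of columns disjoint from S is "good"
  have hgood : ∀ K : Finset (Fin n), Disjoint K S → K.card = k →
      (meas M K \ meas M S).card ≤ e1 := by
    intro K hKS hKcard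
    rcases hSalt with hfull | hlight
    · -- S has full size d - k; a bad K would contradict the ε-inequality
      by_contra hbad
      push_neg at hbad
      have hm1 : (meas M S).card + (meas M K \ meas M S).card ≤ m := by
        have : (meas M K \ meas M S).card + (meas M S).card
            = (meas M K ∪ meas M S).card := Finset.card_sdiff_add_card _ _
        have hle : (meas M K ∪ meas M S).card ≤ m := by
          have := Finset.card_le_card (Finset.subset_univ (meas M K ∪ meas M S))
          simpa using this
        omega
      have hkL : e1 + 1 ≤ k * (L + 1) := by
        have hmod := Nat.div_add_mod e1 k
        have hlt : e1 % k < k := Nat.mod_lt _ (by omega)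
        rw [hL]
        nlinarith [hmod, hlt]
      have hmS : (L + 1) * (d - k) ≤ (meas M S).card := by
        rw [← hfull]; exact hSmeas
      have hkmnat : (e1 + 1) * d ≤ k * m := by
        have hdk : d - k + k = d := by omega
        calc (e1 + 1) * d = (e1 + 1) * (d - k) + (e1 + 1) * k := by
              rw [← Nat.mul_add, hdk]
          _ ≤ (k * (L + 1)) * (d - k) + (e1 + 1) * k := by
              have := Nat.mul_le_mul_right (d - k) hkL
              omega
          _ = k * ((L + 1) * (d - k)) + k * (e1 + 1) := by ring
          _ ≤ k * (meas M S).card + k * (meas M K \ meas M S).card := by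
              have h1' := Nat.mul_le_mul_left k hmS
              have h2' : e1 + 1 ≤ (meas M K \ meas M S).card := hbad
              have h2'' := Nat.mul_le_mul_left k h2'
              omega
          _ = k * ((meas M S).card + (meas M K \ meas M S).card) := by ring
          _ ≤ k * m := Nat.mul_le_mul_left k hm1
      -- real contradiction
      have hkmr : ((e1:ℝ) + 1) * (d:ℝ) ≤ (k:ℝ) * (m:ℝ) := by exact_mod_cast hkmnat
      have hd0 : (0:ℝ) < (d:ℝ) := by exact_mod_cast hd1
      have he1nn : (0:ℝ) ≤ (e1:ℝ) := by positivity
      have h3 : ε * (d:ℝ) * (e1:ℝ) ≤ (d:ℝ) * (e1:ℝ) := by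
        have hprod : (0:ℝ) ≤ (1 - ε) * ((d:ℝ) * (e1:ℝ)) :=
          mul_nonneg (by linarith) (mul_nonneg hd0.le he1nn)
        nlinarith [hprod]
      nlinarith [hkm, hkmr, h3]
    · -- all columns outside S are light
      have hsum : (meas M K \ meas M S).card ≤ ∑ j ∈ K, (meas M {j} \ meas M S).card :=
        meas_sdiff_le_sum M K S
      have heach : ∀ j ∈ K, (meas M {j} \ meas M S).card ≤ L := by
        intro j hj
        exact hlight j (Finset.disjoint_left.1 hKS hj)
      have : ∑ j ∈ K, (meas M {j} \ meas M S).card ≤ ∑ _j ∈ K, L :=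
        Finset.sum_le_sum heach
      have hsum2 : ∑ _j ∈ K, L = k * L := by
        rw [Finset.sum_const, hKcard]; ring
      have hkLe : k * L ≤ e1 := by
        rw [hL, Nat.mul_comm]; exact Nat.div_mul_le_self e1 k
      omega
  -- apply resilience at y = M[S]
  obtain ⟨z, hz⟩ := hres (orMeasure M (indic S))
  set zS := suppB z with hzS
  have hclose : ∀ T : Finset (Fin n), S ⊆ T → T.card ≤ d →
      (meas M T \ meas M S).card ≤ e1 →
      (zS \ T).card ≤ e0' ∧ (T \ zS).card ≤ e1' := by
    intro T hST hTd hTgood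
    have hsparse : (suppB (indic T)).card ≤ d := by rw [suppB_indic]; exact hTd
    have hmeasclose : ClosePair e0 e1 (orMeasure M (indic T)) (orMeasure M (indic S)) := by
      constructor
      · rw [suppB_orMeasure, suppB_orMeasure]
        have : meas M S \ meas M T = ∅ :=
          Finset.sdiff_eq_empty_iff_subset.2 (meas_mono M hST)
        rw [this]; simp
      · rw [suppB_orMeasure, suppB_orMeasure]
        exact hTgood
    have : ClosePair e0' e1' (indic T) z := by
      by_contra hfar
      exact hz (indic T) hsparse hfar hmeasclose
    obtain ⟨hc1, hc2⟩ := this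
    rw [suppB_indic] at hc1 hc2
    exact ⟨hc1, hc2⟩
  -- from T = S
  have hSd : S.card ≤ d := by omega
  have hzSS : (zS \ S).card ≤ e0' :=
    (hclose S (Finset.Subset.refl S) hSd (by
      have : meas M S \ meas M S = ∅ := by simp
      rw [this]; simp)).1
  -- columns outside S and outside zS are at most k - 1
  have hA : ((Finset.univ \ S) \ zS).card ≤ e1' := by
    by_contra hbig
    push_neg at hbig
    have hkle : k ≤ ((Finset.univ \ S) \ zS).card := by omega
    obtain ⟨K, hKsub, hKcard⟩ := Finset.exists_subset_card_eq hkle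
    have hKS : Disjoint K S := by
      rw [Finset.disjoint_left]
      intro a haK haS
      have := hKsub haK
      rw [Finset.mem_sdiff, Finset.mem_sdiff] at this
      exact this.1.2 haS
    have hKz : Disjoint K zS := by
      rw [Finset.disjoint_left]
      intro a haK haz
      have := hKsub haK
      rw [Finset.mem_sdiff] at this
      exact this.2 haz
    have hTcard : (S ∪ K).card ≤ d := by
      have := Finset.card_union_le S K
      have hdk : S.card + K.card ≤ d := by omega
      omega
    have hTgood : (meas M (S ∪ K) \ meas M S).card ≤ e1 := by
      rw [meas_union]
      have : (meas M S ∪ meas M K) \ meas M S = meas M K \ meas M S := by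
        ext i; simp only [Finset.mem_sdiff, Finset.mem_union]; tauto
      rw [this]
      exact hgood K hKS hKcard
    have hc := (hclose (S ∪ K) Finset.subset_union_left hTcard hTgood).2
    have hKsub2 : K ⊆ (S ∪ K) \ zS := by
      intro a haK
      rw [Finset.mem_sdiff]
      exact ⟨Finset.mem_union_right _ haK, Finset.disjoint_left.1 hKz haK⟩
    have := Finset.card_le_card hKsub2
    omega
  -- final counting
  have hsplit : (Finset.univ \ S).card ≤ (zS \ S).card + ((Finset.univ \ S) \ zS).card := by
    have hsub : Finset.univ \ S ⊆ (zS \ S) ∪ ((Finset.univ \ S) \ zS) := by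
      intro a ha
      rw [Finset.mem_sdiff] at ha
      by_cases haz : a ∈ zS
      · exact Finset.mem_union_left _ (Finset.mem_sdiff.2 ⟨haz, ha.2⟩)
      · exact Finset.mem_union_right _ (Finset.mem_sdiff.2 ⟨Finset.mem_sdiff.2 ha, haz⟩)
    calc (Finset.univ \ S).card ≤ ((zS \ S) ∪ ((Finset.univ \ S) \ zS)).card :=
          Finset.card_le_card hsub
      _ ≤ (zS \ S).card + ((Finset.univ \ S) \ zS).card := Finset.card_union_le _ _
  have hcompl : (Finset.univ \ S).card = n - S.card := by
    rw [Finset.card_sdiff_of_subset (Finset.subset_univ S)]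
    simp
  have hSn : S.card ≤ n := by omega
  omega
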